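/- Let ω = 𝔻, α = b² on 𝔻 and 1 outside with b > 1, N ≥ 1, and d ∈ ℤ^N ∖ {0}. Then W^micro(·,d) is not bounded below on (𝔻^N)*: along the configurations z^{(n)} with z_k^{(n)} = (1 − 1/n) e^{2πik/N}, one has W^micro(z^{(n)},d) = O(1) + b²π((b²−1)/(1+b²)) Σ_j d_j² ln(1−|z_j^{(n)}|²) → −∞ as n → ∞. In particular inf{W^micro(z,d) : z ∈ (𝔻^N)*} = −∞ and W^micro(·,d) admits no minimizer. -/

import Mathlib

noncomputable section

open Real Filter Topology

namespace GLPin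

/-- The microscopic renormalized energy in the circular case. -/
def Wmicro (b : ℝ) {N : ℕ} (z : Fin N → ℂ) (d : Fin N → ℤ) : ℝ :=
  -(b ^ 2) * π *
    ((∑ i, ∑ j ∈ Finset.univ.filter (fun j => j ≠ i),
        (d i : ℝ) * (d j : ℝ) * Real.log (‖z i - z j‖))
      + (1 - b ^ 2) / (1 + b ^ 2) *
          ∑ j, (d j : ℝ) ^ 2 * Real.log (1 - ‖z j‖ ^ 2)
      + (1 - b ^ 2) / (1 + b ^ 2) *
          ∑ i, ∑ j ∈ Finset.univ.filter (fun j => j ≠ i),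
            (d i : ℝ) * (d j : ℝ) * Real.log (‖1 - z i * (starRingEnd ℂ) (z j)‖))

/-- The `N`-th roots of unity configuration points. -/
def ptc (N : ℕ) (k : Fin N) : ℂ :=
  Complex.exp (((2 * π * (k : ℕ) / (N : ℝ) : ℝ) : ℂ) * Complex.I)

lemma ptc_abs (N : ℕ) (k : Fin N) : ‖ptc N k‖ = 1 := by
  rw [ptc, Complex.norm_exp]
  simp

lemma ptc_inj {N : ℕ} (hN : 0 < N) : Function.Injective (ptc N) := by
  intro i j h
  rw [ptc, ptc, Complex.exp_eq_exp_iff_exists_int] at h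
  obtain ⟨n, hn⟩ := h
  have him := congrArg Complex.im hn
  simp [Complex.add_im, Complex.mul_im, Complex.I_im, Complex.I_re] at him
  have hπ := Real.pi_pos
  have hN' : (0:ℝ) < N := by exact_mod_cast hN
  have key : (i:ℝ) = (j:ℝ) + n * N := by
    field_simp at him
    nlinarith [him]
  have hi : (i:ℝ) < N := by exact_mod_cast i.2
  have hj : (j:ℝ) < N := by exact_mod_cast j.2
  have hi0 : (0:ℝ) ≤ (i:ℝ) := by positivity
  have hj0 : (0:ℝ) ≤ (j:ℝ) := by positivity
  have hn0 : n = 0 := by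
    rcases lt_trichotomy n 0 with h'|h'|h'
    · have : (n:ℝ) ≤ -1 := by exact_mod_cast Int.le_of_lt_add_one (by simpa using h')
      nlinarith
    · exact h'
    · have : (1:ℝ) ≤ (n:ℝ) := by exact_mod_cast h'
      nlinarith
  rw [hn0] at key
  simp at key
  exact Fin.ext (by exact_mod_cast key)

lemma ptc_sub_ne {N : ℕ} (hN : 0 < N) {i j : Fin N} (h : j ≠ i) :
    ptc N i - ptc N j ≠ 0 :=
  sub_ne_zero.mpr (fun he => h (ptc_inj hN he).symm)

lemma ptc_one_sub_ne {N : ℕ} (hN : 0 < N) {i j : Fin N} (h : j ≠ i) :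
    1 - ptc N i * (starRingEnd ℂ) (ptc N j) ≠ 0 := by
  intro he
  have h1 : ptc N i * (starRingEnd ℂ) (ptc N j) = 1 := by
    have := sub_eq_zero.mp he
    exact this.symm
  have h2 : ptc N j * (starRingEnd ℂ) (ptc N j) = 1 := by
    rw [Complex.mul_conj, Complex.normSq_eq_norm_sq, ptc_abs]
    norm_num
  have hc : (starRingEnd ℂ) (ptc N j) ≠ 0 := by
    intro h0
    have := ptc_abs N j
    rw [← Complex.norm_conj, h0] at this
    simp at this
  have : ptc N i = ptc N j := mul_right_cancel₀ hc (h1.trans h2.symm)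
  exact h (ptc_inj hN this).symm

/-- Key algebraic identity: for the symmetric configuration at radius `ρ`, the energy splits
into a part depending only mildly on `ρ` plus `K · log(1 - ρ²)`. -/
lemma wmicro_ident (b : ℝ) {N : ℕ} (d : Fin N → ℤ) (ρ : ℝ) :
    Wmicro b (fun k => (ρ : ℂ) * ptc N k) d =
      (-(b ^ 2) * π *
        ((∑ i, ∑ j ∈ Finset.univ.filter (fun j => j ≠ i),
            (d i : ℝ) * (d j : ℝ) *
              Real.log (‖(ρ:ℂ) * ptc N i - (ρ:ℂ) * ptc N j‖))
          + (1 - b ^ 2) / (1 + b ^ 2) *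
            ∑ i, ∑ j ∈ Finset.univ.filter (fun j => j ≠ i),
              (d i : ℝ) * (d j : ℝ) *
                Real.log (‖1 - ((ρ:ℂ) * ptc N i) * (starRingEnd ℂ) ((ρ:ℂ) * ptc N j)‖)))
      + (-(b ^ 2) * π * ((1 - b ^ 2) / (1 + b ^ 2)) * ∑ j, ((d j : ℝ)) ^ 2)
          * Real.log (1 - ρ ^ 2) := by
  have hmid : ∑ j, (d j : ℝ) ^ 2 * Real.log (1 - ‖(ρ:ℂ) * ptc N j‖ ^ 2)
      = (∑ j, ((d j : ℝ)) ^ 2) * Real.log (1 - ρ ^ 2) := by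
    rw [Finset.sum_mul]
    refine Finset.sum_congr rfl fun j _ => ?_
    rw [norm_mul, Complex.norm_real, ptc_abs, mul_one, Real.norm_eq_abs, sq_abs]
  rw [Wmicro, hmid]
  ring

theorem b_gt_one_no_minimizer (b : ℝ) (hb : 1 < b) (N : ℕ) (hN : 1 ≤ N)
    (d : Fin N → ℤ) (hd : d ≠ 0) :
    Tendsto (fun n : ℕ => Wmicro b
        (fun k : Fin N => ((1 - 1 / (n : ℝ) : ℝ) : ℂ)
          * Complex.exp (((2 * π * (k : ℕ) / (N : ℝ) : ℝ) : ℂ) * Complex.I)) d)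
      atTop atBot ∧
    (∀ M : ℝ, ∃ z : Fin N → ℂ,
      (∀ i, z i ∈ Metric.ball (0:ℂ) 1) ∧ Function.Injective z ∧ Wmicro b z d < M) ∧
    ¬ ∃ z : Fin N → ℂ, (∀ i, z i ∈ Metric.ball (0:ℂ) 1) ∧ Function.Injective z ∧
        ∀ z' : Fin N → ℂ, (∀ i, z' i ∈ Metric.ball (0:ℂ) 1) → Function.Injective z' →
          Wmicro b z d ≤ Wmicro b z' d := by
  have hN0 : 0 < N := hN
  have hπ := Real.pi_pos
  -- radius sequence
  have hr : Tendsto (fun n : ℕ => 1 - 1 / (n:ℝ)) atTop (𝓝 1) := by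
    have := ((tendsto_const_nhds : Tendsto (fun _ : ℕ => (1:ℝ)) atTop (𝓝 1)).sub
      tendsto_one_div_atTop_nhds_zero_nat)
    simpa using this
  -- the constant K is positive
  have hSpos : 0 < ∑ j, ((d j : ℝ)) ^ 2 := by
    obtain ⟨j, hj⟩ := Function.ne_iff.mp hd
    have hj' : (0:ℝ) < (d j : ℝ) ^ 2 := by
      have : (d j : ℝ) ≠ 0 := by exact_mod_cast hj
      positivity
    exact lt_of_lt_of_le hj'
      (Finset.single_le_sum (f := fun i => ((d i : ℝ)) ^ 2) (fun i _ => sq_nonneg _)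
        (Finset.mem_univ j))
  have hb2 : (0:ℝ) < b ^ 2 := by positivity
  have hcneg : (1 - b ^ 2) / (1 + b ^ 2) < 0 := by
    apply div_neg_of_neg_of_pos <;> nlinarith
  have hKpos : 0 < -(b ^ 2) * π * ((1 - b ^ 2) / (1 + b ^ 2)) * ∑ j, ((d j : ℝ)) ^ 2 := by
    have h1 : 0 < (b ^ 2 * π) * (-((1 - b ^ 2) / (1 + b ^ 2))) * ∑ j, ((d j : ℝ)) ^ 2 :=
      mul_pos (mul_pos (by positivity) (neg_pos.mpr hcneg)) hSpos
    nlinarith [h1]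
  -- the "bounded" part converges
  have hHcont : ∀ (i j : Fin N), j ≠ i →
      Tendsto (fun n : ℕ => (d i : ℝ) * (d j : ℝ) *
        Real.log (‖((1 - 1/(n:ℝ) : ℝ):ℂ) * ptc N i
          - ((1 - 1/(n:ℝ) : ℝ):ℂ) * ptc N j‖)) atTop
        (𝓝 ((d i : ℝ) * (d j : ℝ) *
          Real.log (‖((1:ℝ):ℂ) * ptc N i - ((1:ℝ):ℂ) * ptc N j‖))) := by
    intro i j hij
    apply Tendsto.const_mul
    have hcont : Continuous (fun ρ : ℝ => ‖(ρ:ℂ) * ptc N i - (ρ:ℂ) * ptc N j‖) := by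
      apply continuous_norm.comp
      exact (Complex.continuous_ofReal.mul continuous_const).sub
        (Complex.continuous_ofReal.mul continuous_const)
    have hne : ‖((1:ℝ):ℂ) * ptc N i - ((1:ℝ):ℂ) * ptc N j‖ ≠ 0 := by
      simp only [Complex.ofReal_one, one_mul]
      exact norm_ne_zero_iff.mpr (ptc_sub_ne hN0 hij)
    exact ((Real.continuousAt_log hne).tendsto.comp
      ((hcont.tendsto 1).comp hr))
  have hHcont2 : ∀ (i j : Fin N), j ≠ i →
      Tendsto (fun n : ℕ => (d i : ℝ) * (d j : ℝ) *
        Real.log (‖1 - (((1 - 1/(n:ℝ) : ℝ):ℂ) * ptc N i)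
          * (starRingEnd ℂ) (((1 - 1/(n:ℝ) : ℝ):ℂ) * ptc N j)‖)) atTop
        (𝓝 ((d i : ℝ) * (d j : ℝ) *
          Real.log (‖1 - (((1:ℝ):ℂ) * ptc N i)
            * (starRingEnd ℂ) (((1:ℝ):ℂ) * ptc N j)‖)))  := by
    intro i j hij
    apply Tendsto.const_mul
    have hcont : Continuous (fun ρ : ℝ =>
        ‖1 - ((ρ:ℂ) * ptc N i) * (starRingEnd ℂ) ((ρ:ℂ) * ptc N j)‖) := by
      apply continuous_norm.comp
      apply continuous_const.sub
      exact (Complex.continuous_ofReal.mul continuous_const).mul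
        (Complex.continuous_conj.comp (Complex.continuous_ofReal.mul continuous_const))
    have hne : ‖1 - (((1:ℝ):ℂ) * ptc N i)
        * (starRingEnd ℂ) (((1:ℝ):ℂ) * ptc N j)‖ ≠ 0 := by
      simp only [Complex.ofReal_one, one_mul]
      exact norm_ne_zero_iff.mpr (ptc_one_sub_ne hN0 hij)
    exact ((Real.continuousAt_log hne).tendsto.comp ((hcont.tendsto 1).comp hr))
  -- the diverging part
  have hlog : Tendsto (fun n : ℕ => Real.log (1 - (1 - 1/(n:ℝ)) ^ 2)) atTop atBot := by
    apply Real.tendsto_log_nhdsNE_zero.comp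
    rw [tendsto_nhdsWithin_iff]
    constructor
    · have : Tendsto (fun n : ℕ => 1 - (1 - 1/(n:ℝ)) ^ 2) atTop (𝓝 (1 - 1 ^ 2)) :=
        tendsto_const_nhds.sub (hr.pow 2)
      simpa using this
    · filter_upwards [eventually_ge_atTop 2] with n hn
      have hn' : (2:ℝ) ≤ (n:ℝ) := by exact_mod_cast hn
      have h1 : 0 < 1/(n:ℝ) := by positivity
      have h2 : 1/(n:ℝ) ≤ 1/2 := by
        apply div_le_div_of_nonneg_left <;> linarith
      have : (1 - 1/(n:ℝ)) ^ 2 < 1 := by nlinarith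
      simp only [Set.mem_compl_iff, Set.mem_singleton_iff]
      intro h
      nlinarith [h]
  -- Part 1: the main tendsto statement
  have hmain : Tendsto (fun n : ℕ => Wmicro b
      (fun k : Fin N => ((1 - 1 / (n : ℝ) : ℝ) : ℂ) * ptc N k) d) atTop atBot := by
    simp only [wmicro_ident b d]
    apply Filter.Tendsto.add_atBot
    · apply Tendsto.const_mul
      apply Tendsto.add
      · exact tendsto_finset_sum _ fun i _ =>
          tendsto_finset_sum _ fun j hj =>
            hHcont i j (Finset.mem_filter.mp hj).2
      · apply Tendsto.const_mul
        exact tendsto_finset_sum _ fun i _ =>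
          tendsto_finset_sum _ fun j hj =>
            hHcont2 i j (Finset.mem_filter.mp hj).2
    · exact Tendsto.const_mul_atBot hKpos hlog
  have hpart2 : ∀ M : ℝ, ∃ z : Fin N → ℂ,
      (∀ i, z i ∈ Metric.ball (0:ℂ) 1) ∧ Function.Injective z ∧ Wmicro b z d < M := by
    intro M
    have hev : ∀ᶠ n : ℕ in atTop, Wmicro b
        (fun k : Fin N => ((1 - 1 / (n : ℝ) : ℝ) : ℂ) * ptc N k) d < M :=
      hmain.eventually_lt_atBot M
    obtain ⟨n, hn2, hnM⟩ := (hev.and (eventually_ge_atTop 2)).exists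
    refine ⟨fun k => ((1 - 1 / (n : ℝ) : ℝ) : ℂ) * ptc N k, ?_, ?_, hn2⟩
    · intro i
      have hn' : (2:ℝ) ≤ (n:ℝ) := by exact_mod_cast hnM
      have h1 : 0 < 1/(n:ℝ) := by positivity
      have h2 : 1/(n:ℝ) ≤ 1/2 := by
        apply div_le_div_of_nonneg_left <;> linarith
      simp only [Metric.mem_ball, dist_zero_right, Real.norm_eq_abs, norm_mul,
        Complex.norm_real, ptc_abs, mul_one]
      rw [abs_of_pos (by linarith)]
      linarith
    · intro i j hij
      have hn' : (2:ℝ) ≤ (n:ℝ) := by exact_mod_cast hnM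
      have h1 : 0 < 1/(n:ℝ) := by positivity
      have h2 : 1/(n:ℝ) ≤ 1/2 := by
        apply div_le_div_of_nonneg_left <;> linarith
      have hρ : ((1 - 1 / (n : ℝ) : ℝ) : ℂ) ≠ 0 := by
        simp only [ne_eq, Complex.ofReal_eq_zero]
        intro h; linarith
      exact ptc_inj hN0 (mul_left_cancel₀ hρ hij)
  refine ⟨hmain, hpart2, ?_⟩
  rintro ⟨z, hzball, hzinj, hmin⟩
  obtain ⟨z', hball', hinj', hlt'⟩ := hpart2 (Wmicro b z d)
  exact absurd (hmin z' hball' hinj') (not_le.mpr hlt')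

end GLPin
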